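/- With α, β, γ as in the extremal construction, if at least one of α, β, γ is nonzero, then the extremal Jordan derivation Ω of R_n(K,J) is not a derivation of R_n(K,J). -/

import Mathlib

open Matrix

/-- `R_n(K,J)`: the non-unital subring of `n × n` matrices over `K` whose entries on and
above the main diagonal lie in the two-sided ideal `J`. -/
def Rset (n : ℕ) (K : Type) [Ring K] (J : TwoSidedIdeal K) :
    NonUnitalSubring (Matrix (Fin n) (Fin n) K) where
  carrier := {M | ∀ i j : Fin n, i ≤ j → M i j ∈ J}
  zero_mem' := by intro i j _; simp [J.zero_mem]
  add_mem' := by intro a b ha hb i j h; exact J.add_mem (ha i j h) (hb i j h)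
  neg_mem' := by intro a ha i j h; exact J.neg_mem (ha i j h)
  mul_mem' := by
    intro a b ha hb i j h
    show (∑ k, a i k * b k j) ∈ J
    refine J.finsetSum_mem _ _ fun k _ => ?_
    rcases le_or_gt i k with hik | hik
    · exact J.mul_mem_right _ _ (ha i k hik)
    · exact J.mul_mem_left _ _ (hb k j (le_trans hik.le h))

lemma stdBasis_mem {n : ℕ} {K : Type} [Ring K] {J : TwoSidedIdeal K}
    {i j : Fin n} {y : K} (h : i ≤ j → y ∈ J) :
    Matrix.single i j y ∈ Rset n K J := by
  intro a b hab
  rw [Matrix.single]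
  by_cases hc : i = a ∧ j = b
  · obtain ⟨rfl, rfl⟩ := hc
    simpa using h hab
  · simp [Matrix.of_apply, if_neg hc, J.zero_mem]


set_option maxHeartbeats 1000000 in
/-- if at least one of `α, β, γ` is nonzero on `J`, the extremal Jordan
derivation `Ω` is not a derivation of `R_n(K,J)`. -/
theorem extremal_not_derivation (n : ℕ) (hn : 4 ≤ n) (K : Type) [Ring K]
    (J : TwoSidedIdeal K) (α β γ : K → K)
    (haddα : ∀ y ∈ J, ∀ z ∈ J, α (y + z) = α y + α z)
    (haddβ : ∀ y ∈ J, ∀ z ∈ J, β (y + z) = β y + β z)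
    (haddγ : ∀ y ∈ J, ∀ z ∈ J, γ (y + z) = γ y + γ z)
    (hannα : ∀ y ∈ J, ∀ t ∈ J, α y * t = 0 ∧ t * α y = 0)
    (hannβ : ∀ y ∈ J, ∀ t ∈ J, β y * t = 0 ∧ t * β y = 0)
    (hannγ : ∀ y ∈ J, ∀ t ∈ J, γ y * t = 0 ∧ t * γ y = 0)
    (hsqα : ∀ y ∈ J, ∀ z ∈ J, α (y * z) = 0)
    (hsqβ : ∀ y ∈ J, ∀ z ∈ J, β (y * z) = 0)
    (hsqγ : ∀ y ∈ J, ∀ z ∈ J, γ (y * z) = 0)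
    (hα : ∀ x : K, ∀ y ∈ J, α (y * x) = x * α y)
    (hβ1 : ∀ x : K, ∀ y ∈ J, β (y * x) = x * β y)
    (hβ2 : ∀ x : K, ∀ y ∈ J, β (x * y) = β y * x)
    (hγ : ∀ x : K, ∀ y ∈ J, γ (x * y) = γ y * x)
    (hne : (∃ y ∈ J, α y ≠ 0) ∨ (∃ y ∈ J, β y ≠ 0) ∨ (∃ y ∈ J, γ y ≠ 0)) :
    ∀ Ω : ↥(Rset n K J) → ↥(Rset n K J),
      (∀ M : ↥(Rset n K J),
        (↑(Ω M) : Matrix (Fin n) (Fin n) K) =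
          Matrix.single ⟨n - 2, by omega⟩ ⟨0, by omega⟩
            (α ((M : Matrix (Fin n) (Fin n) K) ⟨0, by omega⟩ ⟨n - 1, by omega⟩)) +
          Matrix.single ⟨n - 2, by omega⟩ ⟨1, by omega⟩
            (β ((M : Matrix (Fin n) (Fin n) K) ⟨0, by omega⟩ ⟨n - 1, by omega⟩)) +
          Matrix.single ⟨n - 1, by omega⟩ ⟨1, by omega⟩
            (γ ((M : Matrix (Fin n) (Fin n) K) ⟨0, by omega⟩ ⟨n - 1, by omega⟩)) +
          Matrix.single ⟨n - 1, by omega⟩ ⟨0, by omega⟩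
            (α ((M : Matrix (Fin n) (Fin n) K) ⟨0, by omega⟩ ⟨n - 2, by omega⟩)) +
          Matrix.single ⟨n - 1, by omega⟩ ⟨1, by omega⟩
            (β ((M : Matrix (Fin n) (Fin n) K) ⟨0, by omega⟩ ⟨n - 2, by omega⟩)) +
          Matrix.single ⟨n - 1, by omega⟩ ⟨0, by omega⟩
            (β ((M : Matrix (Fin n) (Fin n) K) ⟨1, by omega⟩ ⟨n - 2, by omega⟩)) +
          Matrix.single ⟨n - 2, by omega⟩ ⟨0, by omega⟩
            (β ((M : Matrix (Fin n) (Fin n) K) ⟨1, by omega⟩ ⟨n - 1, by omega⟩)) +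
          Matrix.single ⟨n - 1, by omega⟩ ⟨0, by omega⟩
            (γ ((M : Matrix (Fin n) (Fin n) K) ⟨1, by omega⟩ ⟨n - 1, by omega⟩))) →
      ¬ ((∀ a b : ↥(Rset n K J), Ω (a + b) = Ω a + Ω b) ∧
         (∀ a b : ↥(Rset n K J), Ω (a * b) = Ω a * b + a * Ω b)) := by
  intro Ω hΩ hder
  obtain ⟨-, hmul⟩ := hder
  have hα0 : α 0 = 0 := by
    have h := haddα 0 J.zero_mem 0 J.zero_mem
    simp only [add_zero] at h
    exact (left_eq_add.mp h)
  have hβ0 : β 0 = 0 := by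
    have h := haddβ 0 J.zero_mem 0 J.zero_mem
    simp only [add_zero] at h
    exact (left_eq_add.mp h)
  have hγ0 : γ 0 = 0 := by
    have h := haddγ 0 J.zero_mem 0 J.zero_mem
    simp only [add_zero] at h
    exact (left_eq_add.mp h)
  have main : ∀ y ∈ J, α y = 0 ∧ β y = 0 ∧ γ y = 0 := by
    intro y hy
    haveI : NeZero n := ⟨by omega⟩
    let i0 : Fin n := ⟨0, by omega⟩
    let i1 : Fin n := ⟨1, by omega⟩
    let p : Fin n := ⟨n - 2, by omega⟩
    let q : Fin n := ⟨n - 1, by omega⟩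
    have h01 : i0 ≠ i1 := by simp [i0, i1, Fin.ext_iff]
    have h0p : i0 ≠ p := by simp [i0, p, Fin.ext_iff]; omega
    have h0q : i0 ≠ q := by simp [i0, q, Fin.ext_iff]; omega
    have h1p : i1 ≠ p := by simp [i1, p, Fin.ext_iff]; omega
    have h1q : i1 ≠ q := by simp [i1, q, Fin.ext_iff]; omega
    have hpq : p ≠ q := by simp [p, q, Fin.ext_iff]; omega
    have hqp : ¬ (q ≤ p) := by simp [p, q, Fin.le_def]; omega
    have h10 : ¬ (i1 ≤ i0) := by simp [i0, i1, Fin.le_def]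
    let a : ↥(Rset n K J) := ⟨Matrix.single i0 q y, stdBasis_mem fun _ => hy⟩
    let b : ↥(Rset n K J) := ⟨Matrix.single q p (1 : K), stdBasis_mem fun h => absurd h hqp⟩
    let c : ↥(Rset n K J) := ⟨Matrix.single i1 i0 (1 : K), stdBasis_mem fun h => absurd h h10⟩
    have hacoe : (a : Matrix (Fin n) (Fin n) K) = Matrix.single i0 q y := rfl
    have hbcoe : (b : Matrix (Fin n) (Fin n) K) = Matrix.single q p (1 : K) := rfl
    have hccoe : (c : Matrix (Fin n) (Fin n) K) = Matrix.single i1 i0 (1 : K) := rfl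
    have hab : ((a * b : ↥(Rset n K J)) : Matrix (Fin n) (Fin n) K) = Matrix.single i0 p y := by
      rw [MulMemClass.coe_mul, hacoe, hbcoe, Matrix.single_mul_single_same, mul_one]
    have hca : ((c * a : ↥(Rset n K J)) : Matrix (Fin n) (Fin n) K) = Matrix.single i1 q y := by
      rw [MulMemClass.coe_mul, hccoe, hacoe, Matrix.single_mul_single_same, one_mul]
    -- Test 1: a * b forces α y = 0 and β y = 0
    have key1 : (↑(Ω (a * b)) : Matrix (Fin n) (Fin n) K) = (↑(Ω a) : Matrix (Fin n) (Fin n) K) * (↑b : Matrix (Fin n) (Fin n) K) + (↑a : Matrix (Fin n) (Fin n) K) * (↑(Ω b) : Matrix (Fin n) (Fin n) K) := by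
      rw [hmul a b, AddMemClass.coe_add, MulMemClass.coe_mul, MulMemClass.coe_mul]
    rw [hΩ (a * b), hΩ a, hΩ b] at key1
    rw [hab] at key1
    rw [hacoe, hbcoe] at key1
    simp only [Matrix.single_apply_of_ne, Matrix.single_apply_same,
      Matrix.single_apply_of_row_ne, Matrix.single_apply_of_col_ne,
      h01, h0p, h0q, h1p, h1q, hpq, h01.symm, h0p.symm, h0q.symm, h1p.symm, h1q.symm, hpq.symm,
      hα0, hβ0, hγ0, Matrix.single_zero, add_zero, zero_add, add_mul, mul_add,
      Matrix.single_mul_single_of_ne, Matrix.single_mul_single_same, mul_zero, zero_mul,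
      ne_eq, not_false_eq_true] at key1
    have hz : (0 : Fin n) = i0 := Fin.ext (by simp [i0])
    have h1e : (⟨1, by omega⟩ : Fin n) = i1 := rfl
    have hpe : (⟨n - 2, by omega⟩ : Fin n) = p := rfl
    have hqe : (⟨n - 1, by omega⟩ : Fin n) = q := rfl
    have e1 : α y = 0 := by
      have h := congrFun (congrFun key1 q) i0
      simpa [h01, h0p, h0q, h1p, h1q, hpq, h01.symm, h0p.symm, h0q.symm, h1p.symm, h1q.symm,
        hpq.symm, hz, h1e, hpe, hqe, hα0, hβ0, hγ0] using h
    have e2 : β y = 0 := by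
      have h := congrFun (congrFun key1 q) i1
      simpa [h01, h0p, h0q, h1p, h1q, hpq, h01.symm, h0p.symm, h0q.symm, h1p.symm, h1q.symm,
        hpq.symm, hz, h1e, hpe, hqe, hα0, hβ0, hγ0] using h
    -- Test 2: c * a forces γ y = 0
    have key2 : (↑(Ω (c * a)) : Matrix (Fin n) (Fin n) K) = (↑(Ω c) : Matrix (Fin n) (Fin n) K) * (↑a : Matrix (Fin n) (Fin n) K) + (↑c : Matrix (Fin n) (Fin n) K) * (↑(Ω a) : Matrix (Fin n) (Fin n) K) := by
      rw [hmul c a, AddMemClass.coe_add, MulMemClass.coe_mul, MulMemClass.coe_mul]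
    rw [hΩ (c * a), hΩ c, hΩ a] at key2
    rw [hca] at key2
    rw [hccoe, hacoe] at key2
    simp only [Matrix.single_apply_of_ne, Matrix.single_apply_same,
      Matrix.single_apply_of_row_ne, Matrix.single_apply_of_col_ne,
      h01, h0p, h0q, h1p, h1q, hpq, h01.symm, h0p.symm, h0q.symm, h1p.symm, h1q.symm, hpq.symm,
      hα0, hβ0, hγ0, Matrix.single_zero, add_zero, zero_add, add_mul, mul_add,
      Matrix.single_mul_single_of_ne, Matrix.single_mul_single_same, mul_zero, zero_mul,
      ne_eq, not_false_eq_true] at key2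
    have e3 : γ y = 0 := by
      have h := congrFun (congrFun key2 q) i0
      simpa [h01, h0p, h0q, h1p, h1q, hpq, h01.symm, h0p.symm, h0q.symm, h1p.symm, h1q.symm,
        hpq.symm, hz, h1e, hpe, hqe, hα0, hβ0, hγ0, e2] using h
    exact ⟨e1, e2, e3⟩
  rcases hne with ⟨y, hy, hne⟩ | ⟨y, hy, hne⟩ | ⟨y, hy, hne⟩
  · exact hne (main y hy).1
  · exact hne (main y hy).2.1
  · exact hne (main y hy).2.2
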